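/- Let h_{2,1} be as defined. Then h_{2,1}(0) = 2, h_{2,1}(1) = 1, h_{2,1}(2) = h_{2,1}(3) = 3, and for all integers n ≥ 2, h_{2,1}(2n) = 3n - 2 and h_{2,1}(2n+1) = 2n. -/

import Mathlib

/-- For the sequence `h = h_{2,1}` we have `h 0 = 2`, `h 1 = 1`,
`h 2 = h 3 = 3`, and for all `n ≥ 2`, `h (2n) = 3n - 2` and `h (2n+1) = 2n`. -/
theorem stmt17 (h : ℤ → ℕ)
    (hneg : ∀ n : ℤ, n ≤ 0 → h n = 2) (hone : h 1 = 1)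
    (hrec : ∀ n : ℤ, 2 ≤ n → h n = h (n - (h (n - 1) : ℤ)) + h (n - 2)) :
    h 0 = 2 ∧ h 1 = 1 ∧ h 2 = 3 ∧ h 3 = 3 ∧
    ∀ n : ℕ, 2 ≤ n → h (2 * n) = 3 * n - 2 ∧ h (2 * n + 1) = 2 * n := by
  have h0 : h 0 = 2 := hneg 0 le_rfl
  have h2 : h 2 = 3 := by
    have := hrec 2 le_rfl
    norm_num [hone, h0] at this
    exact this
  have h3 : h 3 = 3 := by
    have := hrec 3 (by norm_num)
    norm_num [h2, hone, h0] at this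
    exact this
  refine ⟨h0, hone, h2, h3, ?_⟩
  intro n hn
  induction n, hn using Nat.le_induction with
  | base =>
    have h4 : h 4 = 4 := by
      have := hrec 4 (by norm_num)
      norm_num [h3, h2] at this
      rw [this]; norm_num [hone, h2]
    have h5 : h 5 = 4 := by
      have := hrec 5 (by norm_num)
      norm_num [h4, h3] at this
      rw [this]; norm_num [hone, h3]
    constructor
    · convert h4 using 2 <;> norm_num
    · convert h5 using 2 <;> norm_num
  | succ n hn ih =>
    obtain ⟨ih1, ih2⟩ := ih
    have e1 : h (2 * ((n : ℤ) + 1)) = 3 * (n + 1) - 2 := by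
      have := hrec (2 * ((n:ℤ) + 1)) (by omega)
      have a1 : 2 * ((n:ℤ) + 1) - 1 = 2 * n + 1 := by ring
      have a2 : 2 * ((n:ℤ) + 1) - 2 = 2 * n := by ring
      rw [a1, a2, ih2, ih1] at this
      have a3 : 2 * ((n:ℤ) + 1) - ((2 * n : ℕ) : ℤ) = 2 := by push_cast; ring
      rw [a3, h2] at this
      rw [this]; omega
    have e2 : h (2 * ((n : ℤ) + 1) + 1) = 2 * (n + 1) := by
      have := hrec (2 * ((n:ℤ) + 1) + 1) (by omega)
      have a1 : 2 * ((n:ℤ) + 1) + 1 - 1 = 2 * ((n:ℤ) + 1) := by ring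
      have a2 : 2 * ((n:ℤ) + 1) + 1 - 2 = 2 * n + 1 := by ring
      rw [a1, a2, e1, ih2] at this
      have a3 : 2 * ((n:ℤ) + 1) + 1 - ((3 * (n + 1) - 2 : ℕ) : ℤ) = 2 - n := by
        have : ((3 * (n + 1) - 2 : ℕ) : ℤ) = 3 * (n:ℤ) + 1 := by omega
        rw [this]; ring
      rw [a3, hneg (2 - n) (by omega)] at this
      rw [this]; omega
    constructor
    · have : (2 : ℤ) * ((n + 1 : ℕ) : ℤ) = 2 * ((n:ℤ) + 1) := by push_cast; ring
      rw [this]; exact e1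
    · have : (2 : ℤ) * ((n + 1 : ℕ) : ℤ) + 1 = 2 * ((n:ℤ) + 1) + 1 := by push_cast; ring
      rw [this]; exact e2
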